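/- For any K ≥ 1, any loss vector L : {1,...,K} → ℝ and any nonnegative weights w assigning a real number w(S) ≥ 0 to each nonempty subset S ⊆ {1,...,K}, the minimum over all policies π (functions assigning to each nonempty subset S an element π(S) ∈ S) of Σ_S w(S)·L(π(S)) equals the minimum over all orderings σ (permutations of {1,...,K}) of Σ_S w(S)·L(σ(S)). Consequently, for an oblivious adversarial loss sequence and i.i.d. availability sets, the maximal policy regret equals the maximal ordering regret. -/
import Mathlib


open scoped Classical

/-- The best available arm in `S` according to the ordering `σ` (the element of `S`
with the smallest `σ`-rank), defined for all subsets using a default value when `S = ∅`. -/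
noncomputable def selPerm {K : ℕ} (hK : 0 < K) (σ : Equiv.Perm (Fin K))
    (S : Finset (Fin K)) : Fin K :=
  if h : S.Nonempty then σ ((S.image σ.symm).min' (h.image σ.symm)) else ⟨0, hK⟩

lemma selPerm_mem {K : ℕ} (hK : 0 < K) (σ : Equiv.Perm (Fin K))
    (S : Finset (Fin K)) (h : S.Nonempty) : selPerm hK σ S ∈ S := by
  rw [selPerm, dif_pos h]
  have := (S.image σ.symm).min'_mem (h.image σ.symm)
  rcases Finset.mem_image.mp this with ⟨a, ha, heq⟩
  rw [← heq]
  simpa using ha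

lemma selPerm_le {K : ℕ} (hK : 0 < K) (L : Fin K → ℝ)
    (S : Finset (Fin K)) (h : S.Nonempty) {k : Fin K} (hk : k ∈ S) :
    L (selPerm hK (Tuple.sort L) S) ≤ L k := by
  set σ := Tuple.sort L
  rw [selPerm, dif_pos h]
  have hmem : σ.symm k ∈ S.image σ.symm := Finset.mem_image_of_mem _ hk
  have hle : (S.image σ.symm).min' (h.image σ.symm) ≤ σ.symm k :=
    Finset.min'_le _ _ hmem
  have hmono := Tuple.monotone_sort L
  have := hmono hle
  simpa [σ, Function.comp] using this

/-- **Equivalence of policy and ordering regret for oblivious adversarial losses and i.i.d.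
availabilities:** for any cumulative loss vector `L` and any nonnegative weights `w` on the
nonempty subsets, the minimum over policies `π` of `Σ_S w(S)·L(π(S))` and the minimum over
orderings `σ` of `Σ_S w(S)·L(σ(S))` both exist and coincide.  Hence the maximal policy
regret equals the maximal ordering regret. -/
theorem min_policy_eq_min_ordering_weighted
    (K : ℕ) (hK : 0 < K) (L : Fin K → ℝ)
    (w : Finset (Fin K) → ℝ) (hw : ∀ S, 0 ≤ w S) :
    ∃ m : ℝ,
      IsLeast {x : ℝ | ∃ π : Finset (Fin K) → Fin K,
          (∀ A : Finset (Fin K), A.Nonempty → π A ∈ A) ∧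
          x = ∑ S ∈ Finset.univ.filter (fun S : Finset (Fin K) => S.Nonempty),
                w S * L (π S)} m ∧
      IsLeast {x : ℝ | ∃ σ : Equiv.Perm (Fin K),
          x = ∑ S ∈ Finset.univ.filter (fun S : Finset (Fin K) => S.Nonempty),
                w S * L (selPerm hK σ S)} m := by
  set σ₀ := Tuple.sort L
  set m : ℝ := ∑ S ∈ Finset.univ.filter (fun S : Finset (Fin K) => S.Nonempty),
      w S * L (selPerm hK σ₀ S) with hm
  have hlb : ∀ π : Finset (Fin K) → Fin K,
      (∀ A : Finset (Fin K), A.Nonempty → π A ∈ A) →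
      m ≤ ∑ S ∈ Finset.univ.filter (fun S : Finset (Fin K) => S.Nonempty),
            w S * L (π S) := by
    intro π hπ
    apply Finset.sum_le_sum
    intro S hS
    have hSne : S.Nonempty := (Finset.mem_filter.mp hS).2
    exact mul_le_mul_of_nonneg_left (selPerm_le hK L S hSne (hπ S hSne)) (hw S)
  refine ⟨m, ⟨⟨selPerm hK σ₀, fun A hA => selPerm_mem hK σ₀ A hA, rfl⟩, ?_⟩,
    ⟨⟨σ₀, rfl⟩, ?_⟩⟩
  · rintro x ⟨π, hπ, rfl⟩
    exact hlb π hπ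
  · rintro x ⟨σ, rfl⟩
    exact hlb (selPerm hK σ) (fun A hA => selPerm_mem hK σ A hA)
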